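/- Theorem 1(1)-(2): the policy-rewriting transformation Tr preserves semantics and makes order irrelevant: for every packet, the decision assigned by Tr(R) under first-match semantics equals that assigned by R; moreover, since the rules of Tr(R) have pairwise disjoint match sets, any permutation of Tr(R) assigns the same decision to every packet. -/

import Mathlib

/-- A filtering rule: a match set over a packet space together with a
decision (`true` = accept, `false` = deny). -/
structure FwRule (P : Type*) where
  mtch : Set P
  dec : Bool

open Classical in
/-- First-match semantics: a packet gets the decision of the first rule
whose match set contains it, and no decision if no rule matches. -/
noncomputable def firstMatch {P : Type*} : List (FwRule P) → P → Option Bool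
  | [], _ => none
  | r :: rs, pkt => if pkt ∈ r.mtch then some r.dec else firstMatch rs pkt

/-- Phase 1 of Algorithm 4: every later rule with a decision differing from an
earlier rule gets the earlier rule's match set excluded from it
(`match(exclusion B A) = match B \ match A`). -/
noncomputable def phase1 {P : Type*} : List (FwRule P) → List (FwRule P)
  | [] => []
  | r :: rs =>
      r :: phase1 (rs.map fun s => if s.dec ≠ r.dec then ⟨s.mtch \ r.mtch, s.dec⟩ else s)
termination_by l => l.length
decreasing_by simp

open Classical in
/-- Phase 2 of Algorithm 4: a rule whose match set is covered by the union of
the later rules with the same decision is removed (testRedundancy); otherwise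
its match set is excluded from every later rule with the same decision. -/
noncomputable def phase2 {P : Type*} : List (FwRule P) → List (FwRule P)
  | [] => []
  | r :: rs =>
      if r.mtch ⊆ {pkt | ∃ s ∈ rs, s.dec = r.dec ∧ pkt ∈ s.mtch} then phase2 rs
      else r :: phase2 (rs.map fun s => if s.dec = r.dec then ⟨s.mtch \ r.mtch, s.dec⟩ else s)
termination_by l => l.length
decreasing_by all_goals simp

/-- The policy-rewriting transformation `Tr` of Algorithm 4. -/
noncomputable def Tr {P : Type*} (R : List (FwRule P)) : List (FwRule P) :=
  phase2 (phase1 R)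

section Aux
variable {P : Type*}

open Classical in
lemma firstMatch_cons (r : FwRule P) (rs : List (FwRule P)) (pkt : P) :
    firstMatch (r :: rs) pkt =
      if pkt ∈ r.mtch then some r.dec else firstMatch rs pkt := rfl

/-- `firstMatch` is invariant under maps that preserve decisions and
membership of the given packet. -/
lemma firstMatch_map (f : FwRule P → FwRule P) (pkt : P)
    (hd : ∀ s, (f s).dec = s.dec) (hm : ∀ s, pkt ∈ (f s).mtch ↔ pkt ∈ s.mtch)
    (l : List (FwRule P)) : firstMatch (l.map f) pkt = firstMatch l pkt := by
  induction l with
  | nil => rfl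
  | cons r rs ih =>
      rw [List.map_cons, firstMatch_cons, firstMatch_cons, ih]
      by_cases h : pkt ∈ r.mtch
      · rw [if_pos ((hm r).2 h), if_pos h, hd]
      · rw [if_neg (fun hh => h ((hm r).1 hh)), if_neg h]

/-- Every rule of `phase1 l` has the decision of some rule of `l` and a
smaller match set. -/
lemma phase1_shrink : ∀ (l : List (FwRule P)), ∀ t ∈ phase1 l,
    ∃ s ∈ l, t.dec = s.dec ∧ t.mtch ⊆ s.mtch := by
  intro l
  induction l using phase1.induct with
  | case1 => simp [phase1]
  | case2 r rs ih =>
      simp only [dite_eq_ite, List.map_attach_eq_pmap, List.pmap_eq_map] at ih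
      intro t ht
      rw [phase1] at ht
      rcases List.mem_cons.1 ht with rfl | ht
      · exact ⟨t, List.mem_cons_self, rfl, subset_rfl⟩
      · obtain ⟨s', hs', hd, hm⟩ := ih t ht
        obtain ⟨s, hs, rfl⟩ := List.mem_map.1 hs'
        refine ⟨s, List.mem_cons_of_mem _ hs, ?_, ?_⟩ <;> by_cases h : s.dec = r.dec <;>
          simp [h] at hd hm ⊢ <;> first
          | exact hd | exact hm | exact hm.trans Set.diff_subset

/-- Every rule of `phase2 l` has the decision of some rule of `l` and a
smaller match set. -/
lemma phase2_shrink : ∀ (l : List (FwRule P)), ∀ t ∈ phase2 l,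
    ∃ s ∈ l, t.dec = s.dec ∧ t.mtch ⊆ s.mtch := by
  intro l
  induction l using phase2.induct with
  | case1 => simp [phase2]
  | case2 r rs h ih =>
      intro t ht
      rw [phase2, if_pos h] at ht
      obtain ⟨s, hs, hd, hm⟩ := ih t ht
      exact ⟨s, List.mem_cons_of_mem _ hs, hd, hm⟩
  | case3 r rs h ih =>
      simp only [dite_eq_ite, List.map_attach_eq_pmap, List.pmap_eq_map] at ih
      intro t ht
      rw [phase2, if_neg h] at ht
      rcases List.mem_cons.1 ht with rfl | ht
      · exact ⟨t, List.mem_cons_self, rfl, subset_rfl⟩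
      · obtain ⟨s', hs', hd, hm⟩ := ih t ht
        obtain ⟨s, hs, rfl⟩ := List.mem_map.1 hs'
        refine ⟨s, List.mem_cons_of_mem _ hs, ?_, ?_⟩ <;> by_cases hc : s.dec = r.dec <;>
          simp [hc] at hd hm ⊢ <;> first
          | exact hd | exact hm | exact hm.trans Set.diff_subset

/-- phase1 preserves first-match semantics. -/
lemma firstMatch_phase1 : ∀ (l : List (FwRule P)) (pkt : P),
    firstMatch (phase1 l) pkt = firstMatch l pkt := by
  intro l
  induction l using phase1.induct with
  | case1 => intro pkt; rw [phase1]
  | case2 r rs ih =>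
      intro pkt
      simp only [dite_eq_ite, List.map_attach_eq_pmap, List.pmap_eq_map] at ih
      rw [phase1, firstMatch_cons, firstMatch_cons]
      by_cases h : pkt ∈ r.mtch
      · rw [if_pos h, if_pos h]
      · rw [if_neg h, if_neg h, ih]
        apply firstMatch_map
        · intro s; by_cases hc : s.dec = r.dec <;> simp [hc]
        · intro s; by_cases hc : s.dec = r.dec <;> simp [hc, h]

/-- The invariant established by phase1: rules with different decisions have
disjoint match sets. -/
def DInv (l : List (FwRule P)) : Prop :=
  l.Pairwise fun a b => a.dec ≠ b.dec → a.mtch ∩ b.mtch = ∅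

/-- `DInv` is preserved by any map that preserves decisions and shrinks
match sets. -/
lemma DInv.map {l : List (FwRule P)} (h : DInv l) (f : FwRule P → FwRule P)
    (hd : ∀ s, (f s).dec = s.dec) (hm : ∀ s, (f s).mtch ⊆ s.mtch) :
    DInv (l.map f) := by
  refine List.Pairwise.map _ ?_ h
  intro a b hab hdec
  rw [hd, hd] at hdec
  apply Set.eq_empty_of_subset_empty
  rw [← hab hdec]
  exact Set.inter_subset_inter (hm a) (hm b)

lemma dinv_phase1 : ∀ (l : List (FwRule P)), DInv (phase1 l) := by
  intro l
  induction l using phase1.induct with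
  | case1 => rw [phase1]; exact List.Pairwise.nil
  | case2 r rs ih =>
      simp only [dite_eq_ite, List.map_attach_eq_pmap, List.pmap_eq_map] at ih
      rw [phase1, DInv, List.pairwise_cons]
      refine ⟨?_, ih⟩
      intro t ht hdec
      obtain ⟨s', hs', hd, hm⟩ := phase1_shrink _ t ht
      obtain ⟨s, hs, rfl⟩ := List.mem_map.1 hs'
      by_cases hc : s.dec = r.dec
      · simp [hc] at hd
        exact absurd hd (Ne.symm hdec)
      · simp [hc] at hm
        apply Set.eq_empty_of_subset_empty
        intro x hx
        exact absurd hx.1 (hm hx.2).2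

/-- If some rule of `l` matches `pkt`, then `firstMatch` returns the decision
of some matching rule. -/
lemma firstMatch_exists (l : List (FwRule P)) (pkt : P)
    (h : ∃ s ∈ l, pkt ∈ s.mtch) :
    ∃ t ∈ l, pkt ∈ t.mtch ∧ firstMatch l pkt = some t.dec := by
  induction l with
  | nil => simp at h
  | cons r rs ih =>
      by_cases hr : pkt ∈ r.mtch
      · exact ⟨r, List.mem_cons_self, hr, by rw [firstMatch_cons, if_pos hr]⟩
      · obtain ⟨s, hs, hm⟩ := h
        rcases List.mem_cons.1 hs with rfl | hs
        · exact absurd hm hr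
        · obtain ⟨t, ht, h1, h2⟩ := ih ⟨s, hs, hm⟩
          exact ⟨t, List.mem_cons_of_mem _ ht, h1,
            by rw [firstMatch_cons, if_neg hr, h2]⟩

/-- phase2 preserves first-match semantics, given the phase1 invariant. -/
lemma firstMatch_phase2 : ∀ (l : List (FwRule P)), DInv l → ∀ (pkt : P),
    firstMatch (phase2 l) pkt = firstMatch l pkt := by
  intro l
  induction l using phase2.induct with
  | case1 => intro _ pkt; rw [phase2]
  | case2 r rs h ih =>
      intro hinv pkt
      rw [DInv, List.pairwise_cons] at hinv
      rw [phase2, if_pos h, ih hinv.2, firstMatch_cons]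
      by_cases hr : pkt ∈ r.mtch
      · rw [if_pos hr]
        obtain ⟨s, hs, hd, hm⟩ := h hr
        obtain ⟨t, ht, h1, h2⟩ := firstMatch_exists rs pkt ⟨s, hs, hm⟩
        rw [h2]
        congr 1
        by_contra hne
        have hdisj := hinv.1 t ht (fun he => hne he.symm)
        have hx : pkt ∈ r.mtch ∩ t.mtch := ⟨hr, h1⟩
        rw [hdisj] at hx
        exact hx
      · rw [if_neg hr]
  | case3 r rs h ih =>
      intro hinv pkt
      rw [DInv, List.pairwise_cons] at hinv
      rw [phase2, if_neg h, firstMatch_cons, firstMatch_cons]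
      by_cases hr : pkt ∈ r.mtch
      · rw [if_pos hr, if_pos hr]
      · rw [if_neg hr, if_neg hr]
        simp only [dite_eq_ite, List.map_attach_eq_pmap, List.pmap_eq_map] at ih
        refine (ih (DInv.map hinv.2 _ ?_ ?_) pkt).trans ?_
        · intro s; by_cases hc : s.dec = r.dec <;> simp [hc]
        · intro s; by_cases hc : s.dec = r.dec <;> simp [hc, Set.diff_subset]
        · apply firstMatch_map
          · intro s; by_cases hc : s.dec = r.dec <;> simp [hc]
          · intro s; by_cases hc : s.dec = r.dec <;> simp [hc, hr]

/-- phase2 makes match sets pairwise disjoint, given the phase1 invariant. -/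
lemma pairwise_phase2 : ∀ (l : List (FwRule P)), DInv l →
    (phase2 l).Pairwise fun a b => a.mtch ∩ b.mtch = ∅ := by
  intro l
  induction l using phase2.induct with
  | case1 => intro _; rw [phase2]; exact List.Pairwise.nil
  | case2 r rs h ih =>
      intro hinv
      rw [DInv, List.pairwise_cons] at hinv
      rw [phase2, if_pos h]
      exact ih hinv.2
  | case3 r rs h ih =>
      intro hinv
      rw [DInv, List.pairwise_cons] at hinv
      rw [phase2, if_neg h]
      refine List.Pairwise.cons ?_ ?_
      · intro t ht
        obtain ⟨s', hs', hd, hm⟩ := phase2_shrink _ t ht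
        obtain ⟨s, hs, rfl⟩ := List.mem_map.1 hs'
        by_cases hc : s.dec = r.dec
        · simp [hc] at hm
          apply Set.eq_empty_of_subset_empty
          intro x hx
          exact absurd hx.1 (hm hx.2).2
        · simp [hc] at hd hm
          have hdisj := hinv.1 s hs (fun he => hc he.symm)
          apply Set.eq_empty_of_subset_empty
          intro x hx
          have hx' : x ∈ r.mtch ∩ s.mtch := ⟨hx.1, hm hx.2⟩
          rwa [hdisj] at hx'
      · simp only [dite_eq_ite, List.map_attach_eq_pmap, List.pmap_eq_map] at ih
        refine ih (DInv.map hinv.2 _ ?_ ?_)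
        · intro s; by_cases hc : s.dec = r.dec <;> simp [hc]
        · intro s; by_cases hc : s.dec = r.dec <;> simp [hc, Set.diff_subset]

/-- For pairwise-disjoint policies, the decision is characterized by mere
membership of a matching rule. -/
lemma firstMatch_eq_some_iff (l : List (FwRule P))
    (hl : l.Pairwise fun a b => a.mtch ∩ b.mtch = ∅) (pkt : P) (d : Bool) :
    firstMatch l pkt = some d ↔ ∃ r ∈ l, pkt ∈ r.mtch ∧ r.dec = d := by
  induction l with
  | nil => simp [firstMatch]
  | cons r rs ih =>
      rw [List.pairwise_cons] at hl
      rw [firstMatch_cons]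
      by_cases hr : pkt ∈ r.mtch
      · rw [if_pos hr]
        constructor
        · rintro h
          exact ⟨r, List.mem_cons_self, hr, Option.some_inj.1 h⟩
        · rintro ⟨s, hs, hm, hd⟩
          rcases List.mem_cons.1 hs with rfl | hs
          · rw [hd]
          · have hx : pkt ∈ r.mtch ∩ s.mtch := ⟨hr, hm⟩
            rw [hl.1 s hs] at hx
            exact absurd hx (Set.notMem_empty pkt)
      · rw [if_neg hr, ih hl.2]
        constructor
        · rintro ⟨s, hs, hm, hd⟩
          exact ⟨s, List.mem_cons_of_mem _ hs, hm, hd⟩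
        · rintro ⟨s, hs, hm, hd⟩
          rcases List.mem_cons.1 hs with rfl | hs
          · exact absurd hm hr
          · exact ⟨s, hs, hm, hd⟩

/-- Order irrelevance for pairwise-disjoint policies. -/
lemma firstMatch_perm (l l' : List (FwRule P)) (hp : l'.Perm l)
    (hl : l.Pairwise fun a b => a.mtch ∩ b.mtch = ∅) (pkt : P) :
    firstMatch l' pkt = firstMatch l pkt := by
  have hl' : l'.Pairwise fun a b => a.mtch ∩ b.mtch = ∅ :=
    (hp.pairwise_iff fun {a b} h => by rwa [Set.inter_comm]).2 hl
  cases h1 : firstMatch l' pkt with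
  | some d =>
      obtain ⟨s, hs, hm, hd⟩ := (firstMatch_eq_some_iff l' hl' pkt d).1 h1
      exact ((firstMatch_eq_some_iff l hl pkt d).2 ⟨s, hp.subset hs, hm, hd⟩).symm
  | none =>
      cases h2 : firstMatch l pkt with
      | none => rfl
      | some d =>
          obtain ⟨s, hs, hm, hd⟩ := (firstMatch_eq_some_iff l hl pkt d).1 h2
          have hc := (firstMatch_eq_some_iff l' hl' pkt d).2 ⟨s, hp.symm.subset hs, hm, hd⟩
          rw [h1] at hc
          exact absurd hc (by simp)

end Aux

/-- Theorem 1(1)-(2): `Tr` preserves the first-match semantics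
of the policy, and since the rules of `Tr R` have pairwise disjoint match
sets, any permutation of `Tr R` assigns the same decision to every packet. -/
theorem Tr_equiv_and_order_irrelevant {P : Type*} (R : List (FwRule P)) :
    (∀ pkt : P, firstMatch (Tr R) pkt = firstMatch R pkt) ∧
    ((Tr R).Pairwise (fun a b => a.mtch ∩ b.mtch = ∅) ∧
      ∀ R' : List (FwRule P), R'.Perm (Tr R) →
        ∀ pkt : P, firstMatch R' pkt = firstMatch (Tr R) pkt) := by
  have hpw := pairwise_phase2 (phase1 R) (dinv_phase1 R)
  refine ⟨?_, hpw, ?_⟩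
  · intro pkt
    rw [Tr, firstMatch_phase2 _ (dinv_phase1 R), firstMatch_phase1]
  · intro R' hperm pkt
    exact firstMatch_perm (Tr R) R' hperm hpw pkt
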